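/- Let Ω be a d-dimensional tilable lamination whose translation flow is η-expansive for some η > 0. Then Homeo_L(Ω) is an open subgroup of Homeo(Ω). -/

import Mathlib

/-! Common definitions: tilable laminations and their homeomorphism groups. -/

/-- The group structure on self-homeomorphisms, with `(f * g) x = f (g x)`. -/
instance homeoGroup {Ω : Type} [TopologicalSpace Ω] : Group (Ω ≃ₜ Ω) where
  mul f g := g.trans f
  one := Homeomorph.refl Ω
  inv := Homeomorph.symm
  mul_assoc f g h := Homeomorph.ext fun _ => rfl
  one_mul f := Homeomorph.ext fun _ => rfl
  mul_one f := Homeomorph.ext fun _ => rfl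
  inv_mul_cancel f := Homeomorph.ext fun x => f.symm_apply_apply x

/-- The `C⁰`-metric `δ(f,g) = max (sup_x d(f x, g x)) (sup_x d(f⁻¹ x, g⁻¹ x))` on the
homeomorphism group of a compact metric space (uniformly equivalent to the sum version,
hence inducing the `C⁰`-topology). -/
noncomputable instance homeoMetric {Ω : Type} [MetricSpace Ω] [CompactSpace Ω] :
    MetricSpace (Ω ≃ₜ Ω) :=
  MetricSpace.induced
    (fun f => (((⟨⇑f, f.continuous⟩ : C(Ω, Ω)), (⟨⇑f.symm, f.symm.continuous⟩ : C(Ω, Ω)))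
      : C(Ω, Ω) × C(Ω, Ω)))
    (fun f g h => by
      have h1 : (⟨⇑f, f.continuous⟩ : C(Ω, Ω)) = ⟨⇑g, g.continuous⟩ := congrArg Prod.fst h
      exact Homeomorph.ext fun x => DFunLike.congr_fun h1 x)
    inferInstance

/-- The support of a self-homeomorphism. -/
def homeoSupp {Ω : Type} [TopologicalSpace Ω] (f : Ω ≃ₜ Ω) : Set Ω :=
  closure {x | f x ≠ x}

/-- A chart for a box of a flat lamination structure relative to the `ℝ^d`-action `sub`:
a homeomorphism `B ≃ D × C` with `D ⊆ ℝ^d` open and `C` a Cantor set, intertwining the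
action with translations on the first coordinate. -/
structure BoxChart (d : ℕ) (Ω : Type) [TopologicalSpace Ω]
    (sub : Ω → (Fin d → ℝ) → Ω) where
  carrier : Set Ω
  isOpen_carrier : IsOpen carrier
  C : Type
  [topC : TopologicalSpace C]
  nonemptyC : Nonempty C
  compactC : CompactSpace C
  metrizableC : TopologicalSpace.MetrizableSpace C
  totallyDisconnectedC : TotallyDisconnectedSpace C
  perfectC : Perfect (Set.univ : Set C)
  D : Set (Fin d → ℝ)
  isOpen_D : IsOpen D
  chart : carrier ≃ₜ D × C
  equivariant : ∀ (ω : carrier) (t : Fin d → ℝ) (h1 : sub ω.1 t ∈ carrier)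
      (h2 : ((chart ω).1 : Fin d → ℝ) + t ∈ D),
      chart ⟨sub ω.1 t, h1⟩ = (⟨((chart ω).1 : Fin d → ℝ) + t, h2⟩, (chart ω).2)

attribute [instance] BoxChart.topC

/-- `B` admits a box chart. -/
def HasBoxChart {d : ℕ} {Ω : Type} [TopologicalSpace Ω]
    (sub : Ω → (Fin d → ℝ) → Ω) (B : Set Ω) : Prop :=
  ∃ bc : BoxChart d Ω sub, bc.carrier = B

/-- A `d`-dimensional tilable lamination structure on a (nonempty compact metric) space `Ω`:
a continuous free `ℝ^d`-action `(t, ω) ↦ ω − t =: sub ω t` together with a cover by charted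
boxes. -/
structure TilableLamination (d : ℕ) (Ω : Type) [MetricSpace Ω] where
  sub : Ω → (Fin d → ℝ) → Ω
  continuous_sub : Continuous fun p : Ω × (Fin d → ℝ) => sub p.1 p.2
  sub_zero : ∀ ω, sub ω 0 = ω
  sub_add : ∀ ω s t, sub (sub ω s) t = sub ω (s + t)
  free : ∀ ω t, sub ω t = ω → t = 0
  exists_box : ∀ ω : Ω, ∃ B : Set Ω, HasBoxChart sub B ∧ ω ∈ B

namespace TilableLamination

variable {d : ℕ} {Ω : Type} [MetricSpace Ω]

/-- A box of the lamination; as in the paper, all boxes are assumed internal, i.e. their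
closure is contained in another (charted) box. -/
def IsBox (L : TilableLamination d Ω) (B : Set Ω) : Prop :=
  HasBoxChart L.sub B ∧ ∃ B' : Set Ω, HasBoxChart L.sub B' ∧ closure B ⊆ B'

/-- The leaf (= orbit of the translation flow) through `ω`. -/
def leaf (L : TilableLamination d Ω) (ω : Ω) : Set Ω := Set.range (L.sub ω)

/-- Minimality: every leaf is dense. -/
def Minimal (L : TilableLamination d Ω) : Prop := ∀ ω : Ω, Dense (L.leaf ω)

/-- `η`-expansivity of the translation flow. -/
def IsExpansive (L : TilableLamination d Ω) (η : ℝ) : Prop :=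
  ∀ (x y : Ω) (h : (Fin d → ℝ) ≃ₜ (Fin d → ℝ)), h 0 = 0 →
    (∀ t, dist (L.sub x t) (L.sub y (h t)) < η) →
    ∃ t₀ : Fin d → ℝ, ‖t₀‖ < η ∧ L.sub x t₀ = y

/-- `f` has a (continuous) displacement of norm `< ε`. -/
def DisplacementLt (L : TilableLamination d Ω) (f : Ω ≃ₜ Ω) (ε : ℝ) : Prop :=
  ∃ Φ : Ω → (Fin d → ℝ), Continuous Φ ∧ (∀ ω, f ω = L.sub ω (Φ ω)) ∧ ∀ ω, ‖Φ ω‖ < ε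

end TilableLamination

/-- The points of the box of `bc` whose first chart coordinate lies in `D'`
(i.e. `h⁻¹(D' × C)`). -/
def BoxChart.pre {d : ℕ} {Ω : Type} [TopologicalSpace Ω] {sub : Ω → (Fin d → ℝ) → Ω}
    (bc : BoxChart d Ω sub) (D' : Set (Fin d → ℝ)) : Set Ω :=
  {x | ∃ hx : x ∈ bc.carrier, ((bc.chart ⟨x, hx⟩).1 : Fin d → ℝ) ∈ D'}

/-- The vertical `h⁻¹({s} × C)` of the box of `bc`. -/
def BoxChart.vertical {d : ℕ} {Ω : Type} [TopologicalSpace Ω] {sub : Ω → (Fin d → ℝ) → Ω}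
    (bc : BoxChart d Ω sub) (s : Fin d → ℝ) : Set Ω :=
  {y | ∃ hy : y ∈ bc.carrier, ((bc.chart ⟨y, hy⟩).1 : Fin d → ℝ) = s}

/-- An open Euclidean ball in `ℝ^d` (of positive radius). -/
def IsEuclBall {d : ℕ} (D : Set (Fin d → ℝ)) : Prop :=
  ∃ (x : Fin d → ℝ) (r : ℝ), 0 < r ∧
    D = {y : Fin d → ℝ | Real.sqrt (∑ i, (y i - x i) ^ 2) < r}

namespace TilableLamination

variable {d : ℕ} {Ω : Type} [MetricSpace Ω]

/-- A box of ball type: an (internal) box admitting a chart whose horizontal factor is an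
open Euclidean ball. -/
def IsBallBox (L : TilableLamination d Ω) (B : Set Ω) : Prop :=
  L.IsBox B ∧ ∃ bc : BoxChart d Ω L.sub, bc.carrier = B ∧ IsEuclBall bc.D

/-- The set of leaf-preserving homeomorphisms: those mapping each leaf onto itself. -/
def HomeoL (L : TilableLamination d Ω) : Set (Ω ≃ₜ Ω) :=
  {f | ∀ ω : Ω, ⇑f '' L.leaf ω = L.leaf ω}

/-- `f` preserves the vertical structure: for every point `x = h⁻¹(s,c)` of a box with
chart `h : B → D × C` and every box chart `h'` at `f x`, there is a clopen `C̃ ∋ c`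
with `f (h⁻¹({s} × C̃))` contained in the vertical of `f x` in the second box. -/
def VSP (L : TilableLamination d Ω) (f : Ω ≃ₜ Ω) : Prop :=
  ∀ (bc : BoxChart d Ω L.sub) (x : Ω) (hx : x ∈ bc.carrier)
    (bc' : BoxChart d Ω L.sub) (hfx : f x ∈ bc'.carrier),
    ∃ Ct : Set bc.C, IsClopen Ct ∧ (bc.chart ⟨x, hx⟩).2 ∈ Ct ∧
      ∀ (y : Ω) (hy : y ∈ bc.carrier),
        (bc.chart ⟨y, hy⟩).1 = (bc.chart ⟨x, hx⟩).1 → (bc.chart ⟨y, hy⟩).2 ∈ Ct →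
          f y ∈ bc'.vertical ((bc'.chart ⟨f x, hfx⟩).1 : Fin d → ℝ)

/-- The set of vertical-structure-preserving homeomorphisms. -/
def HomeoVsp (L : TilableLamination d Ω) : Set (Ω ≃ₜ Ω) := {f | L.VSP f}

end TilableLamination

/-- The connected component of the identity in a set `S` of homeomorphisms (with the
subspace topology of the `C⁰`-topology), viewed as a subset of the homeomorphism group. -/
def idCompIn {Ω : Type} [MetricSpace Ω] [CompactSpace Ω] (S : Set (Ω ≃ₜ Ω)) :
    Set (Ω ≃ₜ Ω) :=
  {f | ∃ hf : f ∈ S, ∃ h1 : (1 : Ω ≃ₜ Ω) ∈ S,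
    (⟨f, hf⟩ : S) ∈ connectedComponent (⟨1, h1⟩ : S)}

/-- The path component of the identity in a set `S` of homeomorphisms (with the subspace
topology of the `C⁰`-topology), viewed as a subset of the homeomorphism group. -/
def pathCompIn {Ω : Type} [MetricSpace Ω] [CompactSpace Ω] (S : Set (Ω ≃ₜ Ω)) :
    Set (Ω ≃ₜ Ω) :=
  {f | ∃ hf : f ∈ S, ∃ h1 : (1 : Ω ≃ₜ Ω) ∈ S,
    (⟨f, hf⟩ : S) ∈ pathComponent (⟨1, h1⟩ : S)}

/-- `S` is a simple group: a subgroup-like subset which is nontrivial and has no normal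
subgroup other than `{1}` and itself. -/
def IsSimpleGroupSet {G : Type*} [Group G] (S : Set G) : Prop :=
  (1 : G) ∈ S ∧ (∀ a ∈ S, ∀ b ∈ S, a * b ∈ S) ∧ (∀ a ∈ S, a⁻¹ ∈ S) ∧
  (∃ a ∈ S, a ≠ 1) ∧
  ∀ N : Set G, N ⊆ S → (1 : G) ∈ N → (∀ a ∈ N, ∀ b ∈ N, a * b ∈ N) →
    (∀ a ∈ N, a⁻¹ ∈ N) → (∀ g ∈ S, ∀ n ∈ N, g * n * g⁻¹ ∈ N) →
    N = {1} ∨ N = S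

/-- The commutator (derived) subgroup of a subset `S` of a group: the subgroup generated by
commutators of elements of `S`, as a set. -/
def derivedOf {G : Type*} [Group G] (S : Set G) : Set G :=
  (Subgroup.closure {x | ∃ a ∈ S, ∃ b ∈ S, x = a * b * a⁻¹ * b⁻¹} : Subgroup G)

/-- The partition (fragmentation) property for a set of homeomorphisms of a lamination. -/
def PartitionProperty {d : ℕ} {Ω : Type} [MetricSpace Ω]
    (L : TilableLamination d Ω) (S : Set (Ω ≃ₜ Ω)) : Prop :=
  ∀ (k : ℕ) (B : Fin k → Set Ω), (∀ i, L.IsBox (B i)) → (⋃ i, B i) = Set.univ →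
    ∀ f ∈ S, ∃ (ℓ : ℕ) (g : Fin ℓ → (Ω ≃ₜ Ω)) (j : Fin ℓ → Fin k),
      (∀ i, g i ∈ S) ∧ f = (List.ofFn g).prod ∧ ∀ i, homeoSupp (g i) ⊆ B (j i)

/-! ### Auxiliary lemmas for the proof -/

section AuxLemmas

open Metric

namespace TilableLamination

variable {d : ℕ} {Ω : Type} [MetricSpace Ω] (L : TilableLamination d Ω)

lemma sub_injective (y : Ω) : Function.Injective (L.sub y) := by
  intro a b hab
  have h2 : L.sub (L.sub y a) (b - a) = L.sub y a := by
    rw [L.sub_add, show a + (b - a) = b by abel, hab]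
  exact (sub_eq_zero.mp (L.free _ _ h2)).symm

lemma mem_leaf_sub (ω : Ω) (t : Fin d → ℝ) : L.sub ω t ∈ L.leaf ω := ⟨t, rfl⟩

lemma mem_leaf_self (ω : Ω) : ω ∈ L.leaf ω := ⟨0, L.sub_zero ω⟩

lemma leaf_eq_of_mem {ω ω' : Ω} (h : ω' ∈ L.leaf ω) : L.leaf ω' = L.leaf ω := by
  obtain ⟨t, rfl⟩ := h
  ext z
  constructor
  · rintro ⟨u, rfl⟩
    exact ⟨t + u, (L.sub_add ω t u).symm⟩
  · rintro ⟨u, rfl⟩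
    refine ⟨-t + u, ?_⟩
    rw [L.sub_add]; congr 1; abel

lemma mem_leaf_symm {ω ω' : Ω} (h : ω' ∈ L.leaf ω) : ω ∈ L.leaf ω' := by
  rw [L.leaf_eq_of_mem h]; exact L.mem_leaf_self ω

/-- The plaque lemma: two points of a box with the same Cantor coordinate whose
`ℝ^d`-coordinates are joined inside `D` lie on the same orbit, with the obvious
translation vector. -/
lemma plaque' (bc : BoxChart d Ω L.sub) {ω ω' : Ω}
    (hω : ω ∈ bc.carrier) (hω' : ω' ∈ bc.carrier) (s s' : bc.D) (c₀ : bc.C)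
    (h1 : bc.chart ⟨ω, hω⟩ = (s, c₀)) (h2 : bc.chart ⟨ω', hω'⟩ = (s', c₀))
    (hj : JoinedIn bc.D (s : Fin d → ℝ) (s' : Fin d → ℝ)) :
    ω' = L.sub ω ((s' : Fin d → ℝ) - (s : Fin d → ℝ)) := by
  obtain ⟨σ, hσ⟩ := hj
  replace hσ : ∀ u : unitInterval, σ u ∈ bc.D := fun u => hσ u
  set ψ : unitInterval → Ω := fun u => (bc.chart.symm (⟨σ u, hσ u⟩, c₀) : Ω) with hψ
  have hψcont : Continuous ψ :=
    continuous_subtype_val.comp (bc.chart.symm.continuous.comp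
      ((Continuous.subtype_mk (map_continuous σ) _).prodMk continuous_const))
  set T : Set unitInterval := {u | L.sub ω (σ u - (s : Fin d → ℝ)) = ψ u} with hT
  have hσcont : Continuous fun u : unitInterval => σ u - (s : Fin d → ℝ) :=
    (map_continuous σ).sub continuous_const
  have hclosed : IsClosed T :=
    isClosed_eq (L.continuous_sub.comp (continuous_const.prodMk hσcont)) hψcont
  have hopen : IsOpen T := by
    rw [isOpen_iff_mem_nhds]
    intro u0 hu0
    set w0 : bc.carrier := bc.chart.symm (⟨σ u0, hσ u0⟩, c₀) with hw0
    have hchart_w0 : bc.chart w0 = (⟨σ u0, hσ u0⟩, c₀) := bc.chart.apply_symm_apply _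
    have hWopen : IsOpen ((fun u : unitInterval => L.sub (w0 : Ω) (σ u - σ u0)) ⁻¹' bc.carrier) :=
      bc.isOpen_carrier.preimage (L.continuous_sub.comp
        (continuous_const.prodMk ((map_continuous σ).sub continuous_const)))
    have hu0W : u0 ∈ (fun u : unitInterval => L.sub (w0 : Ω) (σ u - σ u0)) ⁻¹' bc.carrier := by
      show L.sub (w0 : Ω) (σ u0 - σ u0) ∈ bc.carrier
      simp only [sub_self, L.sub_zero]
      exact w0.2
    filter_upwards [hWopen.mem_nhds hu0W] with u hu
    have hD2 : ((bc.chart w0).1 : Fin d → ℝ) + (σ u - σ u0) ∈ bc.D := by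
      rw [hchart_w0]
      simpa [show σ u0 + (σ u - σ u0) = σ u by abel] using hσ u
    have heq := bc.equivariant w0 (σ u - σ u0) hu hD2
    have hRHS : ((⟨((bc.chart w0).1 : Fin d → ℝ) + (σ u - σ u0), hD2⟩ : bc.D), (bc.chart w0).2)
        = ((⟨σ u, hσ u⟩ : bc.D), c₀) := by
      refine Prod.ext (Subtype.ext ?_) ?_
      · show ((bc.chart w0).1 : Fin d → ℝ) + (σ u - σ u0) = σ u
        rw [hchart_w0]; show σ u0 + (σ u - σ u0) = σ u; abel
      · show (bc.chart w0).2 = c₀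
        rw [hchart_w0]
    have hval : (⟨L.sub (w0 : Ω) (σ u - σ u0), hu⟩ : bc.carrier)
        = bc.chart.symm (⟨σ u, hσ u⟩, c₀) :=
      (bc.chart.symm_apply_apply _).symm.trans (congrArg bc.chart.symm (heq.trans hRHS))
    show L.sub ω (σ u - (s : Fin d → ℝ)) = ψ u
    have hstep : L.sub ω (σ u - (s : Fin d → ℝ)) = L.sub (w0 : Ω) (σ u - σ u0) := by
      have hbase : L.sub ω (σ u0 - (s : Fin d → ℝ)) = (w0 : Ω) := hu0
      rw [← hbase, L.sub_add]; congr 1; abel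
    rw [hstep]
    exact congrArg Subtype.val hval
  have h0T : (0 : unitInterval) ∈ T := by
    show L.sub ω (σ 0 - (s : Fin d → ℝ)) = ψ 0
    have harg : ((⟨σ 0, hσ 0⟩ : bc.D), c₀) = (s, c₀) := by
      refine Prod.ext (Subtype.ext ?_) rfl
      exact σ.source
    have hpsi0 : ψ 0 = ω := by
      show (bc.chart.symm (⟨σ 0, hσ 0⟩, c₀) : Ω) = ω
      rw [harg, ← h1, bc.chart.symm_apply_apply]
    rw [hpsi0, σ.source, sub_self, L.sub_zero]
  have hall : T = Set.univ := IsClopen.eq_univ ⟨hclosed, hopen⟩ ⟨0, h0T⟩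
  have h1T : (1 : unitInterval) ∈ T := hall ▸ Set.mem_univ _
  have hfin : L.sub ω (σ 1 - (s : Fin d → ℝ)) = ψ 1 := h1T
  have harg' : ((⟨σ 1, hσ 1⟩ : bc.D), c₀) = (s', c₀) := by
    refine Prod.ext (Subtype.ext ?_) rfl
    exact σ.target
  have hψ1 : ψ 1 = ω' := by
    show (bc.chart.symm (⟨σ 1, hσ 1⟩, c₀) : Ω) = ω'
    rw [harg', ← h2, bc.chart.symm_apply_apply]
  rw [← hψ1, ← hfin, σ.target]

/-- The local lemma: a continuous map from a ball in a real normed space into `Ω`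
locally stays in the orbit of the image of the center, with continuous parameter. -/
lemma loc {E : Type} [NormedAddCommGroup E] [NormedSpace ℝ E]
    (F : E → Ω) (hF : Continuous F) (t0 : E) :
    ∃ ε > 0, ∃ s : E → (Fin d → ℝ), ContinuousOn s (ball t0 ε) ∧
      ∀ t ∈ ball t0 ε, F t = L.sub (F t0) (s t) := by
  classical
  obtain ⟨B, hB, hmem⟩ := L.exists_box (F t0)
  obtain ⟨bc, rfl⟩ := hB
  obtain ⟨ε, hε, hball⟩ := Metric.isOpen_iff.mp (bc.isOpen_carrier.preimage hF) t0 hmem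
  haveI := bc.totallyDisconnectedC
  set q : bc.carrier → (Fin d → ℝ) := fun w => ((bc.chart w).1 : Fin d → ℝ) with hq
  have hqcont : Continuous q :=
    continuous_subtype_val.comp (continuous_fst.comp bc.chart.continuous)
  set cm : bc.carrier → bc.C := fun w => (bc.chart w).2 with hcm
  have hcmcont : Continuous cm := continuous_snd.comp bc.chart.continuous
  have ht0 : t0 ∈ ball t0 ε := mem_ball_self hε
  set Fb : ball t0 ε → bc.carrier := fun u => ⟨F u, hball u.2⟩ with hFb
  have hFbcont : Continuous Fb := Continuous.subtype_mk (hF.comp continuous_subtype_val) _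
  have hpathcon : IsPathConnected (ball t0 ε) :=
    (convex_ball t0 ε).isPathConnected ⟨t0, ht0⟩
  have hconst : ∀ u : ball t0 ε, cm (Fb u) = cm (Fb ⟨t0, ht0⟩) := by
    haveI : PreconnectedSpace (ball t0 ε) :=
      Subtype.preconnectedSpace hpathcon.isConnected.isPreconnected
    have hpc : IsPreconnected ((fun u : ball t0 ε => cm (Fb u)) '' Set.univ) :=
      isPreconnected_univ.image _ (hcmcont.comp hFbcont).continuousOn
    intro u
    exact hpc.subsingleton ⟨u, Set.mem_univ u, rfl⟩ ⟨⟨t0, ht0⟩, Set.mem_univ _, rfl⟩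
  refine ⟨ε, hε, fun t =>
    if h : t ∈ ball t0 ε then q ⟨F t, hball h⟩ - q ⟨F t0, hball ht0⟩ else 0, ?_, ?_⟩
  · rw [continuousOn_iff_continuous_restrict]
    have hres : (ball t0 ε).domRestrict (fun t =>
        if h : t ∈ ball t0 ε then q ⟨F t, hball h⟩ - q ⟨F t0, hball ht0⟩ else 0)
        = fun u : ball t0 ε => q (Fb u) - q ⟨F t0, hball ht0⟩ := by
      funext u
      simp only [Set.domRestrict_apply, dif_pos u.2]
      rfl
    rw [hres]
    exact (hqcont.comp hFbcont).sub continuous_const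
  · intro t ht
    simp only [dif_pos ht]
    have hjoin : JoinedIn bc.D (q ⟨F t0, hball ht0⟩) (q ⟨F t, hball ht⟩) := by
      have hj : Joined (⟨t0, ht0⟩ : ball t0 ε) ⟨t, ht⟩ :=
        (hpathcon.joinedIn t0 ht0 t ht).joined_subtype
      obtain ⟨γ⟩ := hj
      refine ⟨γ.map (hqcont.comp hFbcont), ?_⟩
      intro u
      show q (Fb (γ u)) ∈ bc.D
      exact (bc.chart (Fb (γ u))).1.2
    have hcc : (bc.chart ⟨F t, hball ht⟩).2 = (bc.chart ⟨F t0, hball ht0⟩).2 :=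
      hconst ⟨t, ht⟩
    exact L.plaque' bc (hball ht0) (hball ht)
      (bc.chart ⟨F t0, hball ht0⟩).1 (bc.chart ⟨F t, hball ht⟩).1
      (bc.chart ⟨F t0, hball ht0⟩).2 rfl (Prod.ext rfl hcc) hjoin

/-- Path components are contained in leaves. -/
lemma mem_leaf_of_joined {a b : Ω} (h : Joined a b) : b ∈ L.leaf a := by
  obtain ⟨γ⟩ := h
  set S : Set ℝ := {u | γ.extend u ∈ L.leaf a} with hS
  have hloc : ∀ u0 : ℝ, ∃ ε > 0, ∀ u ∈ ball u0 ε, γ.extend u ∈ L.leaf (γ.extend u0) := by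
    intro u0
    obtain ⟨ε, hε, s, _, hsub⟩ := L.loc γ.extend γ.continuous_extend u0
    exact ⟨ε, hε, fun u hu => (hsub u hu) ▸ L.mem_leaf_sub _ _⟩
  have hopen : IsOpen S := by
    rw [isOpen_iff_mem_nhds]
    intro u0 hu0
    obtain ⟨ε, hε, hl⟩ := hloc u0
    filter_upwards [Metric.ball_mem_nhds u0 hε] with u hu
    show γ.extend u ∈ L.leaf a
    rw [← L.leaf_eq_of_mem hu0]
    exact hl u hu
  have hcl : IsClosed S := by
    rw [← isOpen_compl_iff, isOpen_iff_mem_nhds]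
    intro u0 hu0
    obtain ⟨ε, hε, hl⟩ := hloc u0
    filter_upwards [Metric.ball_mem_nhds u0 hε] with u hu
    intro hmem
    apply hu0
    show γ.extend u0 ∈ L.leaf a
    rw [← L.leaf_eq_of_mem hmem]
    exact L.mem_leaf_symm (hl u hu)
  have h0S : (0 : ℝ) ∈ S := by
    show γ.extend 0 ∈ L.leaf a
    rw [γ.extend_zero]
    exact L.mem_leaf_self a
  have : S = Set.univ := IsClopen.eq_univ ⟨hcl, hopen⟩ ⟨0, h0S⟩
  have h1 : (1 : ℝ) ∈ S := this ▸ Set.mem_univ _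
  have : γ.extend 1 ∈ L.leaf a := h1
  rwa [γ.extend_one] at this

lemma exists_param {x y : Ω} (k : Ω → Ω) (hk : Continuous k) (hkx : k x = y) :
    ∃ g : (Fin d → ℝ) → (Fin d → ℝ), Continuous g ∧ g 0 = 0 ∧
      ∀ t, k (L.sub x t) = L.sub y (g t) := by
  have hleaf : ∀ t, k (L.sub x t) ∈ L.leaf y := by
    intro t
    have hpath : Joined x (L.sub x t) := by
      refine ⟨⟨⟨fun u => L.sub x ((u : ℝ) • t), ?_⟩, ?_, ?_⟩⟩
      · exact L.continuous_sub.comp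
          (continuous_const.prodMk (continuous_subtype_val.smul continuous_const))
      · show L.sub x ((0 : ℝ) • t) = x
        rw [zero_smul, L.sub_zero]
      · show L.sub x ((1 : ℝ) • t) = L.sub x t
        rw [one_smul]
    obtain ⟨γp⟩ := hpath
    have hj2 : Joined (k x) (k (L.sub x t)) := ⟨γp.map hk⟩
    rw [hkx] at hj2
    exact L.mem_leaf_of_joined hj2
  choose g hg using hleaf
  have hFcont : Continuous fun t => k (L.sub x t) :=
    hk.comp (L.continuous_sub.comp (continuous_const.prodMk continuous_id))
  refine ⟨g, ?_, ?_, fun t => (hg t).symm⟩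
  · rw [continuous_iff_continuousAt]
    intro t0
    obtain ⟨ε, hε, s, hscont, hsub⟩ := L.loc _ hFcont t0
    have hgt : ∀ u ∈ ball t0 ε, g u = g t0 + s u := by
      intro u hu
      apply L.sub_injective y
      rw [hg u, hsub u hu, ← hg t0, L.sub_add]
    have hca : ContinuousAt (fun u => g t0 + s u) t0 :=
      continuousAt_const.add (hscont.continuousAt (Metric.ball_mem_nhds t0 hε))
    apply hca.congr
    filter_upwards [Metric.ball_mem_nhds t0 hε] with u hu
    exact (hgt u hu).symm
  · apply L.sub_injective y
    rw [hg 0, L.sub_zero, hkx, L.sub_zero]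

lemma mem_homeoL_of_close {η : ℝ} (hexp : L.IsExpansive η)
    (k : Ω ≃ₜ Ω) (hk : ∀ z, dist (k z) z < η) : ∀ ω, ⇑k '' L.leaf ω = L.leaf ω := by
  have key : ∀ (f : Ω ≃ₜ Ω), (∀ z, dist (f z) z < η) → ∀ w, f w ∈ L.leaf w := by
    intro f hf w
    obtain ⟨g, hgc, hg0, hgeq⟩ := L.exists_param (x := w) (y := f w) f f.continuous rfl
    obtain ⟨g', hgc', hg0', hgeq'⟩ :=
      L.exists_param (x := f w) (y := w) f.symm f.symm.continuous (f.symm_apply_apply w)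
    have hleft : ∀ t, g' (g t) = t := by
      intro t
      apply L.sub_injective w
      rw [← hgeq' (g t), ← hgeq t, f.symm_apply_apply]
    have hright : ∀ t, g (g' t) = t := by
      intro t
      apply L.sub_injective (f w)
      rw [← hgeq (g' t), ← hgeq' t, f.apply_symm_apply]
    set H : (Fin d → ℝ) ≃ₜ (Fin d → ℝ) :=
      ⟨⟨g, g', hleft, hright⟩, hgc, hgc'⟩ with hH
    obtain ⟨t0, _, ht0⟩ := hexp w (f w) H hg0 (fun t => by
      show dist (L.sub w t) (L.sub (f w) (g t)) < η
      rw [← hgeq t, dist_comm]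
      exact hf _)
    exact ⟨t0, ht0⟩
  intro ω
  apply Set.Subset.antisymm
  · rintro z ⟨p, hp, rfl⟩
    rw [← L.leaf_eq_of_mem hp]
    exact key k hk p
  · intro z hz
    have hk' : ∀ z, dist (k.symm z) z < η := by
      intro z
      have := hk (k.symm z)
      rwa [k.apply_symm_apply, dist_comm] at this
    refine ⟨k.symm z, ?_, k.apply_symm_apply z⟩
    rw [← L.leaf_eq_of_mem hz]
    exact key k.symm hk' z

end TilableLamination

end AuxLemmas

variable {d : ℕ} {Ω : Type} [MetricSpace Ω] [CompactSpace Ω] [Nonempty Ω]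

open TilableLamination

/-- If the translation flow of a tilable lamination is `η`-expansive for
some `η > 0`, then `Homeo_L(Ω)` is an open subgroup of `Homeo(Ω)`. -/
theorem homeoL_open_of_expansive (L : TilableLamination d Ω) {η : ℝ} (hη : 0 < η)
    (hexp : L.IsExpansive η) :
    ((1 : Ω ≃ₜ Ω) ∈ HomeoL L ∧
      (∀ a ∈ HomeoL L, ∀ b ∈ HomeoL L, a * b ∈ HomeoL L) ∧
      (∀ a ∈ HomeoL L, a⁻¹ ∈ HomeoL L)) ∧
    IsOpen (HomeoL L) := by
  have hsubgrp : ((1 : Ω ≃ₜ Ω) ∈ HomeoL L ∧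
      (∀ a ∈ HomeoL L, ∀ b ∈ HomeoL L, a * b ∈ HomeoL L) ∧
      (∀ a ∈ HomeoL L, a⁻¹ ∈ HomeoL L)) := by
    refine ⟨?_, ?_, ?_⟩
    · intro ω
      show ⇑(1 : Ω ≃ₜ Ω) '' L.leaf ω = L.leaf ω
      have h1 : ⇑(1 : Ω ≃ₜ Ω) = id := rfl
      rw [h1, Set.image_id]
    · intro a ha b hb ω
      show ⇑(a * b) '' L.leaf ω = L.leaf ω
      have hco : ⇑(a * b) = ⇑a ∘ ⇑b := rfl
      rw [hco, Set.image_comp, hb ω, ha ω]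
    · intro a ha ω
      show ⇑a⁻¹ '' L.leaf ω = L.leaf ω
      have hco : ⇑a⁻¹ = ⇑a.symm := rfl
      rw [hco]
      ext z
      constructor
      · rintro ⟨p, hp, rfl⟩
        have hp' : p ∈ ⇑a '' L.leaf ω := (ha ω).symm ▸ hp
        obtain ⟨q, hq, rfl⟩ := hp'
        rwa [a.symm_apply_apply]
      · intro hz
        refine ⟨a z, ?_, a.symm_apply_apply z⟩
        rw [← ha ω]
        exact ⟨z, hz, rfl⟩
  refine ⟨hsubgrp, ?_⟩
  rw [Metric.isOpen_iff]
  intro f hf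
  refine ⟨η, hη, fun g hg => ?_⟩
  have hgf : dist g f < η := Metric.mem_ball.mp hg
  have hdistf : ∀ w, dist (g w) (f w) < η := by
    intro w
    have h1 : dist (g w) (f w)
        ≤ dist (⟨⇑g, g.continuous⟩ : C(Ω, Ω)) (⟨⇑f, f.continuous⟩ : C(Ω, Ω)) :=
      ContinuousMap.dist_apply_le_dist
        (f := (⟨⇑g, g.continuous⟩ : C(Ω, Ω))) (g := (⟨⇑f, f.continuous⟩ : C(Ω, Ω))) w
    have h2 : dist (⟨⇑g, g.continuous⟩ : C(Ω, Ω)) (⟨⇑f, f.continuous⟩ : C(Ω, Ω))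
        ≤ dist g f := by
      have : dist g f = max
          (dist (⟨⇑g, g.continuous⟩ : C(Ω, Ω)) (⟨⇑f, f.continuous⟩ : C(Ω, Ω)))
          (dist (⟨⇑g.symm, g.symm.continuous⟩ : C(Ω, Ω))
            (⟨⇑f.symm, f.symm.continuous⟩ : C(Ω, Ω))) := Prod.dist_eq
      rw [this]
      exact le_max_left _ _
    linarith
  set k : Ω ≃ₜ Ω := f.symm.trans g with hkdef
  have hk : ∀ z, dist (k z) z < η := by
    intro z
    have : dist (g (f.symm z)) (f (f.symm z)) < η := hdistf (f.symm z)
    rwa [f.apply_symm_apply] at this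
  have hkL := L.mem_homeoL_of_close hexp k hk
  intro ω
  show ⇑g '' L.leaf ω = L.leaf ω
  have hco : ⇑g = ⇑k ∘ ⇑f := by
    funext x
    show g x = g (f.symm (f x))
    rw [f.symm_apply_apply]
  rw [hco, Set.image_comp, hf ω, hkL ω]
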